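/- Adopt the Grid setup. Then for every j ∈ {1,…,K} and l ∈ {1,…,K'}, ∫_{a_{jl}+L/(5K')}^{a_{j(l+1)}−L/(5K')} |π_{jl}(x) − 1| dx ≤ L·K·exp(−K'/30). -/

import Mathlib

open MeasureTheory

noncomputable section

/-- Width `L = (b-a)/K` of the coarse grid. -/
def gL (a b : ℝ) (K : ℕ) : ℝ := (b - a) / K

/-- Left endpoint `a_{jl} = a + (j-1)L + (l-1)L/K'` of the `(j,l)`-th subinterval
(0-indexed: `j : Fin K`, `l : Fin K'`). -/
def gA (a b : ℝ) (K K' : ℕ) (j : Fin K) (l : Fin K') : ℝ :=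
  a + (j : ℕ) * gL a b K + (l : ℕ) * gL a b K / K'

/-- Midpoint `c_{jl}` of the `(j,l)`-th subinterval. -/
def gC (a b : ℝ) (K K' : ℕ) (j : Fin K) (l : Fin K') : ℝ :=
  gA a b K K' j l + gL a b K / (2 * K')

/-- The Gaussian softmax weight `π_{jl}(x)`. -/
def gPi (a b : ℝ) (K K' : ℕ) (μ : Fin K → Fin K' → ℝ) (σ2 : ℝ)
    (j : Fin K) (l : Fin K') (x : ℝ) : ℝ :=
  Real.exp (-(x - μ j l) ^ 2 / (2 * σ2)) /
    ∑ t : Fin K, ∑ s : Fin K', Real.exp (-(x - μ t s) ^ 2 / (2 * σ2))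

end

set_option maxHeartbeats 1000000 in
theorem stmt6 (a b : ℝ) (hab : a < b) (K K' : ℕ) (hK : 0 < K) (hK' : 0 < K')
    (μ : Fin K → Fin K' → ℝ)
    (hμ : ∀ j l, |μ j l - gC a b K K' j l| ≤ gL a b K / (6 * K'))
    (σ2 : ℝ) (hσl : gL a b K ^ 2 / (2 * (K' : ℝ) ^ 3) ≤ σ2)
    (hσu : σ2 ≤ gL a b K ^ 2 / (K' : ℝ) ^ 3) :
    ∀ (j : Fin K) (l : Fin K'),
      (∫ x in Set.Ioc (gA a b K K' j l + gL a b K / (5 * K'))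
          (gA a b K K' j l + gL a b K / K' - gL a b K / (5 * K')),
        |gPi a b K K' μ σ2 j l x - 1|)
        ≤ gL a b K * K * Real.exp (-(K' : ℝ) / 30) := by
  intro j l
  have hKR : (0:ℝ) < K := Nat.cast_pos.2 hK
  have hK'R : (0:ℝ) < K' := Nat.cast_pos.2 hK'
  set L : ℝ := gL a b K with hLdef
  have hL : 0 < L := div_pos (sub_pos.2 hab) hKR
  set δ : ℝ := L / K' with hδdef
  have hδ : 0 < δ := div_pos hL hK'R
  have hLδ : L = K' * δ := by rw [hδdef, mul_div_assoc', eq_div_iff hK'R.ne', mul_comm]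
  have hσ2pos : 0 < σ2 := lt_of_lt_of_le (by positivity) hσl
  have hσδ : (K':ℝ) * σ2 ≤ δ ^ 2 := by
    have h1 : σ2 ≤ δ ^ 2 / K' := by
      rw [hδdef, div_pow]
      calc σ2 ≤ L ^ 2 / (K':ℝ) ^ 3 := hσu
        _ = L ^ 2 / (K':ℝ) ^ 2 / K' := by ring
    calc (K':ℝ) * σ2 ≤ K' * (δ ^ 2 / K') := by nlinarith
      _ = δ ^ 2 := by field_simp
  set A : ℝ := gA a b K K' j l with hAdef
  have hcenter : ∀ (t : Fin K) (s : Fin K'),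
      gC a b K K' t s = a + (t : ℕ) * L + (s : ℕ) * δ + δ / 2 := by
    intro t s
    rw [gC, gA, ← hLdef, hδdef]
    field_simp
  set c : ℝ := gC a b K K' j l with hcdef
  have hcA : c = A + δ / 2 := by
    rw [hcdef, hAdef, gC, gA, ← hLdef, hδdef]
    have : L / (2 * (K':ℝ)) = L / K' / 2 := by rw [div_div, mul_comm]
    rw [gA, ← hLdef] at hAdef
    rw [this]
  have h5 : L / (5 * K') = δ / 5 := by rw [hδdef, div_div, mul_comm]
  have h6 : L / (6 * K') = δ / 6 := by rw [hδdef, div_div, mul_comm]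
  set e : ℝ := Real.exp (-(K':ℝ) / 30) with hedef
  have he : 0 < e := Real.exp_pos _
  -- pointwise bound
  have hpt : ∀ x ∈ Set.Ioc (A + L / (5 * K')) (A + L / K' - L / (5 * K')),
      |gPi a b K K' μ σ2 j l x - 1| ≤ (K:ℝ) * K' * e := by
    intro x hx
    rw [h5] at hx
    rw [← hδdef] at hx
    obtain ⟨hx1, hx2⟩ := hx
    have hxc : |x - c| ≤ 3 * δ / 10 := by
      rw [abs_le, hcA]
      constructor <;> [linarith; linarith]
    simp only [gPi]
    set S : ℝ := ∑ t : Fin K, ∑ s : Fin K', Real.exp (-(x - μ t s) ^ 2 / (2 * σ2))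
      with hSdef
    set w : Fin K × Fin K' → ℝ :=
      fun p => Real.exp (-(x - μ p.1 p.2) ^ 2 / (2 * σ2)) with hwdef
    have hwpos : ∀ p, 0 < w p := fun p => Real.exp_pos _
    have hSrw : S = ∑ p : Fin K × Fin K', w p := by
      rw [hSdef]
      exact (Fintype.sum_prod_type (f := w)).symm
    have hS : 0 < S := by
      rw [hSrw]
      exact Finset.sum_pos (fun p _ => hwpos p) ⟨(j, l), Finset.mem_univ _⟩
    have hwS : w (j, l) ≤ S := by
      rw [hSrw]
      exact Finset.single_le_sum (fun p _ => (hwpos p).le) (Finset.mem_univ _)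
    have hwjl : Real.exp (-(x - μ j l) ^ 2 / (2 * σ2)) = w (j, l) := rfl
    rw [hwjl]
    have hY : |x - μ j l| ≤ 7 * δ / 15 := by
      have h1 := hμ j l
      rw [h6, ← hcdef] at h1
      calc |x - μ j l| ≤ |x - c| + |c - μ j l| := abs_sub_le x c (μ j l)
        _ = |x - c| + |μ j l - c| := by rw [abs_sub_comm c]
        _ ≤ 3 * δ / 10 + δ / 6 := add_le_add hxc h1
        _ = 7 * δ / 15 := by ring
    -- each off-diagonal weight is small
    have hterm : ∀ p : Fin K × Fin K', p ≠ (j, l) → w p ≤ e * w (j, l) := by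
      intro p hp
      obtain ⟨t, s⟩ := p
      have hsK : (((s:ℕ):ℤ)) < (K':ℤ) := by exact_mod_cast s.isLt
      have hlK : (((l:ℕ):ℤ)) < (K':ℤ) := by exact_mod_cast l.isLt
      have hs0 : (0:ℤ) ≤ ((s:ℕ):ℤ) := Int.ofNat_nonneg _
      have hl0 : (0:ℤ) ≤ ((l:ℕ):ℤ) := Int.ofNat_nonneg _
      have hK'Z : (0:ℤ) < (K':ℤ) := by exact_mod_cast hK'
      have hne : (((t:ℕ):ℤ) - ((j:ℕ):ℤ)) * K' + (((s:ℕ):ℤ) - ((l:ℕ):ℤ)) ≠ 0 := by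
        intro h0
        rcases eq_or_ne t j with htj | htj
        · subst htj
          have hz : (((t:ℕ):ℤ) - ((t:ℕ):ℤ)) * (K':ℤ) = 0 := by ring
          have hsl' : s ≠ l := fun h => hp (by rw [h])
          have hsn : (s:ℕ) ≠ (l:ℕ) := fun h => hsl' (Fin.ext h)
          omega
        · have htn : (t:ℕ) ≠ (j:ℕ) := fun h => htj (Fin.ext h)
          have hmne : ((t:ℕ):ℤ) ≠ ((j:ℕ):ℤ) := by exact_mod_cast htn
          rcases lt_or_gt_of_ne hmne with h | h
          · have hb : (((t:ℕ):ℤ) - ((j:ℕ):ℤ)) * K' ≤ -(K':ℤ) := by nlinarith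
            omega
          · have hb : (K':ℤ) ≤ (((t:ℕ):ℤ) - ((j:ℕ):ℤ)) * K' := by nlinarith
            omega
      set n : ℤ := (((t:ℕ):ℤ) - ((j:ℕ):ℤ)) * K' + (((s:ℕ):ℤ) - ((l:ℕ):ℤ)) with hndef
      have hn1 : (1:ℝ) ≤ |(n:ℝ)| := by
        have h1 : (1:ℤ) ≤ |n| := by
          rcases hne.lt_or_gt with h | h
          · rw [abs_of_neg h]; omega
          · rw [abs_of_pos h]; omega
        rw [← Int.cast_abs]
        exact_mod_cast h1
      have hcc : gC a b K K' t s - c = (n:ℝ) * δ := by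
        rw [hcdef, hcenter t s, hcenter j l, hndef, hLδ]
        push_cast
        ring
      have hccd : δ ≤ |gC a b K K' t s - c| := by
        rw [hcc, abs_mul, abs_of_pos hδ]
        nlinarith
      have hX : 8 * δ / 15 ≤ |x - μ t s| := by
        have h1 := hμ t s
        rw [h6] at h1
        have h2 : |gC a b K K' t s - c| ≤ |gC a b K K' t s - μ t s| + |μ t s - c| :=
          abs_sub_le _ _ _
        have h3 : |μ t s - c| ≤ |μ t s - x| + |x - c| := abs_sub_le _ _ _
        have h4 : |gC a b K K' t s - μ t s| = |μ t s - gC a b K K' t s| :=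
          abs_sub_comm _ _
        have h5' : |μ t s - x| = |x - μ t s| := abs_sub_comm _ _
        rw [h4] at h2
        rw [h5'] at h3
        linarith
      -- exponent comparison
      show Real.exp (-(x - μ t s) ^ 2 / (2 * σ2)) ≤
        Real.exp (-(K':ℝ) / 30) * Real.exp (-(x - μ j l) ^ 2 / (2 * σ2))
      rw [← Real.exp_add]
      apply Real.exp_le_exp.2
      have hY2 : (x - μ j l) ^ 2 ≤ (7 * δ / 15) ^ 2 := by
        nlinarith [sq_abs (x - μ j l), abs_nonneg (x - μ j l)]
      have hX2 : (8 * δ / 15) ^ 2 ≤ (x - μ t s) ^ 2 := by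
        nlinarith [sq_abs (x - μ t s), abs_nonneg (x - μ t s)]
      have hkey : (x - μ j l) ^ 2 + (K':ℝ) * σ2 / 15 ≤ (x - μ t s) ^ 2 := by
        nlinarith
      have h2σ : (0:ℝ) < 2 * σ2 := by linarith
      have hd1 : ((x - μ j l) ^ 2 + (K':ℝ) * σ2 / 15) / (2 * σ2) ≤
          (x - μ t s) ^ 2 / (2 * σ2) := by gcongr
      have hd2 : ((x - μ j l) ^ 2 + (K':ℝ) * σ2 / 15) / (2 * σ2) =
          (x - μ j l) ^ 2 / (2 * σ2) + (K':ℝ) / 30 := by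
        field_simp
        ring
      rw [neg_div, neg_div, neg_div]
      linarith [hd1, hd2.symm.le]
    -- combine
    have hπ1 : w (j, l) / S ≤ 1 := div_le_one_of_le₀ hwS hS.le
    have hπ0 : (0:ℝ) ≤ w (j, l) / S := div_nonneg (hwpos _).le hS.le
    rw [abs_of_nonpos (by linarith), neg_sub]
    -- S - w(j,l) ≤ K K' e w(j,l)
    have hsum : S - w (j, l) ≤ (K:ℝ) * K' * e * w (j, l) := by
      have h1 : ∑ p ∈ Finset.univ.erase (j, l), w p + w (j, l) = S := by
        rw [hSrw]
        exact Finset.sum_erase_add _ _ (Finset.mem_univ _)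
      have h2 : ∑ p ∈ Finset.univ.erase (j, l), w p ≤
          (Finset.univ.erase (j, l)).card • (e * w (j, l)) :=
        Finset.sum_le_card_nsmul _ _ _ (fun p hp =>
          hterm p (Finset.ne_of_mem_erase hp))
      have h3 : ((Finset.univ.erase ((j, l) : Fin K × Fin K')).card : ℝ)
          ≤ (K:ℝ) * K' := by
        calc ((Finset.univ.erase ((j, l) : Fin K × Fin K')).card : ℝ)
            ≤ ((Finset.univ : Finset (Fin K × Fin K')).card : ℝ) := by
              exact_mod_cast Finset.card_le_card (Finset.erase_subset _ _)
          _ = (K:ℝ) * K' := by simp [Finset.card_univ]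
      have h4 : ((Finset.univ.erase ((j, l) : Fin K × Fin K')).card : ℝ) *
          (e * w (j, l)) ≤ (K:ℝ) * K' * e * w (j, l) := by
        have hnn : 0 ≤ e * w (j, l) := by positivity
        nlinarith
      rw [nsmul_eq_mul] at h2
      linarith
    have h1 : 1 - w (j, l) / S = (S - w (j, l)) / S := by
      field_simp
    rw [h1, div_le_iff₀ hS]
    calc S - w (j, l) ≤ (K:ℝ) * K' * e * w (j, l) := hsum
      _ ≤ (K:ℝ) * K' * e * S := by
        apply mul_le_mul_of_nonneg_left hwS
        positivity
  -- integral bound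
  have hmeasset : MeasurableSet (Set.Ioc (A + L / (5 * K'))
      (A + L / K' - L / (5 * K'))) := measurableSet_Ioc
  have hlen : A + L / K' - L / (5 * K') - (A + L / (5 * K')) = 3 * δ / 5 := by
    rw [h5, ← hδdef]; ring
  have hvol : volume (Set.Ioc (A + L / (5 * K')) (A + L / K' - L / (5 * K')))
      = ENNReal.ofReal (3 * δ / 5) := by
    rw [Real.volume_Ioc, hlen]
  have hfin : volume (Set.Ioc (A + L / (5 * K')) (A + L / K' - L / (5 * K')))
      < ⊤ := by
    rw [hvol]; exact ENNReal.ofReal_lt_top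
  have hnorm : ∀ x ∈ Set.Ioc (A + L / (5 * K')) (A + L / K' - L / (5 * K')),
      ‖|gPi a b K K' μ σ2 j l x - 1|‖ ≤ (K:ℝ) * K' * e := by
    intro x hx
    rw [Real.norm_eq_abs, abs_abs]
    exact hpt x hx
  have hmain := norm_setIntegral_le_of_norm_le_const (μ := volume) hfin
    hnorm
  rw [measureReal_def, hvol, ENNReal.toReal_ofReal (by positivity)] at hmain
  calc (∫ x in Set.Ioc (A + L / (5 * K')) (A + L / K' - L / (5 * K')),
        |gPi a b K K' μ σ2 j l x - 1|)
      ≤ ‖∫ x in Set.Ioc (A + L / (5 * K')) (A + L / K' - L / (5 * K')),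
        |gPi a b K K' μ σ2 j l x - 1|‖ := by
        rw [Real.norm_eq_abs]; exact le_abs_self _
    _ ≤ (K:ℝ) * K' * e * (3 * δ / 5) := hmain
    _ ≤ L * K * e := by
        rw [hLδ]
        nlinarith [mul_nonneg (mul_nonneg (mul_nonneg hKR.le hK'R.le) hδ.le) he.le]
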